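/- For every n, l ∈ ℕ, the rank-one operator E_{n,l} : ζ ↦ ⟪e_l, ζ⟫ e_n on ℓ²(ℕ, ℂ) belongs to the smallest closed unital star-subalgebra of B(ℓ²(ℕ, ℂ)) containing A and C_λ. (In the paper these operators E_{n,l} are constructed inside ψ^{2,λ}(C(SU_q(2))) using spectral projections of γγ* and powers of α, and are used to prove surjectivity of the Plancherel unitary Q_L.) -/

import Mathlib

noncomputable section SUq2Aux

open scoped ComplexConjugate ENNReal

local notation "H" => lp (fun _ : ℕ => ℂ) 2
local notation "⟪" x ", " y "⟫" => @inner ℂ _ _ x y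

private def ee (k : ℕ) : lp (fun _ : ℕ => ℂ) 2 := lp.single 2 k 1

private lemma ee_apply (k j : ℕ) : (ee k : ∀ _ : ℕ, ℂ) j = if j = k then 1 else 0 := by
  simp [ee, lp.single_apply, Pi.single_apply]

private lemma coord (f : H) (j : ℕ) : ⟪ee j, f⟫ = f j := by
  rw [ee, lp.inner_single_left]; simp

private lemma ext_coord {x y : H} (h : ∀ j, (x : ∀ _ : ℕ, ℂ) j = y j) : x = y :=
  lp.ext (funext h)

private lemma ext_inner {x y : H} (h : ∀ j, ⟪ee j, x⟫ = ⟪ee j, y⟫) : x = y :=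
  ext_coord fun j => by rw [← coord, ← coord]; exact h j

private lemma inner_ee (j k : ℕ) : ⟪ee j, ee k⟫ = if j = k then 1 else 0 := by
  rw [coord, ee_apply]

private lemma diag_coord (T : H →L[ℂ] H) (a : ℕ → ℂ)
    (hT : ∀ k, T (ee k) = a k • ee k) (ζ : H) (j : ℕ) :
    (T ζ : ∀ _ : ℕ, ℂ) j = a j * ζ j := by
  have h1 : HasSum (fun k : ℕ => lp.single 2 k ((ζ : ∀ _ : ℕ, ℂ) k)) ζ :=
    lp.hasSum_single (by norm_num) ζ
  have h2 : HasSum (fun k : ℕ => (ζ k * a k) • ee k) (T ζ) := by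
    have h := T.hasSum h1
    refine h.congr_fun fun k => ?_
    have hsingle : lp.single 2 k ((ζ : ∀ _ : ℕ, ℂ) k) = ζ k • ee k := by
      rw [ee, ← lp.single_smul]
      simp
    rw [hsingle, map_smul, hT, smul_smul]
  have h3 := (innerSL ℂ (ee j)).hasSum h2
  have h4 : (fun k : ℕ => (innerSL ℂ (ee j)) ((ζ k * a k) • ee k)) =
      fun k : ℕ => if k = j then ζ j * a j else 0 := by
    funext k
    simp only [innerSL_apply_apply, inner_smul_right, inner_ee]
    by_cases h : k = j
    · simp [h]
    · simp [h, Ne.symm h]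
  rw [h4] at h3
  have h5 := h3.unique (hasSum_ite_eq j (ζ j * a j))
  have h6 : ⟪ee j, T ζ⟫ = (T ζ : ∀ _ : ℕ, ℂ) j := coord _ _
  rw [innerSL_apply_apply] at h5
  rw [← h6, h5, mul_comm]

private lemma diag_norm_le (T : H →L[ℂ] H) (a : ℕ → ℂ)
    (hT : ∀ k, T (ee k) = a k • ee k) {ε : ℝ} (hε : 0 ≤ ε) (ha : ∀ k, ‖a k‖ ≤ ε) :
    ‖T‖ ≤ ε := by
  refine T.opNorm_le_bound hε fun ζ => ?_
  have hp : 0 < (2 : ℝ≥0∞).toReal := by norm_num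
  refine lp.norm_le_of_forall_sum_le hp (by positivity) fun s => ?_
  have h2 : (2 : ℝ≥0∞).toReal = ((2 : ℕ) : ℝ) := by norm_num
  have key : ∀ i, ‖(T ζ : ∀ _ : ℕ, ℂ) i‖ ^ (2 : ℝ≥0∞).toReal
      ≤ ε ^ 2 * ‖(ζ : ∀ _ : ℕ, ℂ) i‖ ^ (2 : ℝ≥0∞).toReal := by
    intro i
    rw [h2, Real.rpow_natCast, Real.rpow_natCast, diag_coord T a hT ζ i, norm_mul, mul_pow]
    have h1 : ‖a i‖ ^ 2 ≤ ε ^ 2 := by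
      apply pow_le_pow_left₀ (norm_nonneg _) (ha i)
    nlinarith [sq_nonneg ‖(ζ : ∀ _ : ℕ, ℂ) i‖, norm_nonneg ((ζ : ∀ _ : ℕ, ℂ) i)]
  calc ∑ i ∈ s, ‖(T ζ : ∀ _ : ℕ, ℂ) i‖ ^ (2 : ℝ≥0∞).toReal
      ≤ ∑ i ∈ s, ε ^ 2 * ‖(ζ : ∀ _ : ℕ, ℂ) i‖ ^ (2 : ℝ≥0∞).toReal :=
        Finset.sum_le_sum fun i _ => key i
    _ = ε ^ 2 * ∑ i ∈ s, ‖(ζ : ∀ _ : ℕ, ℂ) i‖ ^ (2 : ℝ≥0∞).toReal := by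
        rw [Finset.mul_sum]
    _ ≤ ε ^ 2 * ‖ζ‖ ^ (2 : ℝ≥0∞).toReal := by
        apply mul_le_mul_of_nonneg_left (lp.sum_rpow_le_norm_rpow hp ζ s) (by positivity)
    _ = (ε * ‖ζ‖) ^ (2 : ℝ≥0∞).toReal := by
        rw [h2, Real.rpow_natCast, Real.rpow_natCast, mul_pow]

set_option maxHeartbeats 1600000 in
/-- Every rank-one operator `E_{n,l} : ζ ↦ ⟪e_l, ζ⟫ e_n` belongs to the smallest
closed unital star-subalgebra of `B(ℓ²(ℕ))` containing `A` and `C_λ`. -/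
theorem stmt_10 (q : ℝ) (hq0 : 0 < |q|) (hq1 : |q| < 1)
    (lam : ℂ) (hlam : ‖lam‖ = 1)
    (A C : lp (fun _ : ℕ => ℂ) 2 →L[ℂ] lp (fun _ : ℕ => ℂ) 2)
    (hA0 : A (lp.single 2 0 (1 : ℂ)) = 0)
    (hA : ∀ k : ℕ, A (lp.single 2 (k + 1) (1 : ℂ)) =
      ((Real.sqrt (1 - q ^ (2 * (k + 1))) : ℝ) : ℂ) • lp.single 2 k (1 : ℂ))
    (hC : ∀ k : ℕ, C (lp.single 2 k (1 : ℂ)) = (lam * (q : ℂ) ^ k) • lp.single 2 k (1 : ℂ)) :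
    ∀ n l : ℕ,
      (innerSL ℂ (lp.single 2 l (1 : ℂ))).smulRight (lp.single 2 n (1 : ℂ)) ∈
        (StarAlgebra.adjoin ℂ
          ({A, C} : Set (lp (fun _ : ℕ => ℂ) 2 →L[ℂ] lp (fun _ : ℕ => ℂ) 2))).topologicalClosure := by
  intro n l
  have hq2 : q ^ 2 < 1 := by
    have := pow_lt_one₀ (abs_nonneg q) hq1 (two_ne_zero)
    rwa [← abs_pow, abs_of_nonneg (sq_nonneg q)] at this
  have hq2' : 0 < q ^ 2 := by
    have : q ≠ 0 := by simpa [abs_pos] using hq0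
    positivity
  set s : ℕ → ℝ := fun k => Real.sqrt (1 - q ^ (2 * (k + 1))) with hs_def
  have hs_pos : ∀ k, 0 < s k := by
    intro k
    apply Real.sqrt_pos.mpr
    have : q ^ (2 * (k + 1)) < 1 := by
      rw [pow_mul]
      exact pow_lt_one₀ (sq_nonneg q) hq2 (Nat.succ_ne_zero k)
    linarith
  have hA0' : A (ee 0) = 0 := hA0
  have hA' : ∀ k, A (ee (k + 1)) = ((s k : ℝ) : ℂ) • ee k := fun k => hA k
  have hC' : ∀ k, C (ee k) = (lam * (q : ℂ) ^ k) • ee k := fun k => hC k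
  -- adjoints on basis vectors
  have hstarA : ∀ k, (star A) (ee k) = ((s k : ℝ) : ℂ) • ee (k + 1) := by
    intro k
    apply ext_inner
    intro j
    rw [ContinuousLinearMap.star_eq_adjoint, ContinuousLinearMap.adjoint_inner_right,
      inner_smul_right, inner_ee]
    cases j with
    | zero => simp [hA0']
    | succ m =>
      rw [hA', inner_smul_left, inner_ee]
      by_cases h : m = k
      · simp [h]
      · simp [h, fun hmk => h (Nat.succ_injective hmk)]
  have hstarC : ∀ k, (star C) (ee k) = (conj (lam * (q : ℂ) ^ k)) • ee k := by
    intro k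
    apply ext_inner
    intro j
    rw [ContinuousLinearMap.star_eq_adjoint, ContinuousLinearMap.adjoint_inner_right,
      inner_smul_right, inner_ee, hC', inner_smul_left, inner_ee]
    by_cases h : j = k <;> simp [h]
  -- the diagonal operator D = C* C and its powers
  set D : H →L[ℂ] H := star C * C with hD_def
  have hD : ∀ k, D (ee k) = (((q ^ 2) ^ k : ℝ) : ℂ) • ee k := by
    intro k
    have : D (ee k) = (star C) (C (ee k)) := rfl
    rw [this, hC', map_smul, hstarC, smul_smul]
    congr 1
    have h1 : lam * (q : ℂ) ^ k * conj (lam * (q : ℂ) ^ k) = ↑(Complex.normSq (lam * (q:ℂ)^k)) :=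
      Complex.mul_conj _
    rw [h1]
    have h2 : Complex.normSq (lam * (q:ℂ)^k) = (q ^ 2) ^ k := by
      rw [map_mul]
      have hl : Complex.normSq lam = 1 := by
        have := Complex.sq_norm lam
        rw [← this, hlam]; norm_num
      rw [hl, one_mul]
      have : ((q:ℂ)^k) = ((q ^ k : ℝ) : ℂ) := by push_cast; ring
      rw [this, Complex.normSq_ofReal]
      ring
    rw [h2]
  have hDpow : ∀ m k, (D ^ m) (ee k) = ((((q ^ 2) ^ k) ^ m : ℝ) : ℂ) • ee k := by
    intro m
    induction m with
    | zero => intro k; simp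
    | succ m ih =>
      intro k
      rw [pow_succ, ContinuousLinearMap.mul_apply, hD, map_smul, ih, smul_smul]
      congr 1
      push_cast
      ring
  -- the rank-one operator E00
  set E00 : H →L[ℂ] H := (innerSL ℂ (ee 0)).smulRight (ee 0) with hE00_def
  have hE00 : ∀ k, E00 (ee k) = (if k = 0 then (1:ℂ) else 0) • ee k := by
    intro k
    rw [hE00_def, ContinuousLinearMap.smulRight_apply, innerSL_apply_apply, inner_ee]
    by_cases h : k = 0
    · simp [h]
    · rw [if_neg h, if_neg (fun h0 : 0 = k => h h0.symm)]
      simp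
  -- norm convergence D^m → E00
  have hnorm : ∀ m, ‖D ^ m - E00‖ ≤ (q ^ 2) ^ m := by
    intro m
    apply diag_norm_le (D ^ m - E00)
      (fun k => ((((q ^ 2) ^ k) ^ m : ℝ) : ℂ) - (if k = 0 then (1:ℂ) else 0))
    · intro k
      rw [ContinuousLinearMap.sub_apply, hDpow, hE00, sub_smul]
    · positivity
    · intro k
      cases k with
      | zero => simpa using pow_nonneg (le_of_lt hq2') m
      | succ j =>
        rw [if_neg (Nat.succ_ne_zero j), sub_zero, Complex.norm_real, Real.norm_eq_abs,
          abs_of_nonneg (by positivity), ← pow_mul]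
        apply pow_le_pow_of_le_one (le_of_lt hq2') (le_of_lt hq2)
        exact Nat.le_mul_of_pos_left m (Nat.succ_pos j)
  have htend : Filter.Tendsto (fun m => D ^ m) Filter.atTop (nhds E00) := by
    rw [tendsto_iff_norm_sub_tendsto_zero]
    apply squeeze_zero (fun m => norm_nonneg _) hnorm
    exact tendsto_pow_atTop_nhds_zero_of_lt_one (le_of_lt hq2') hq2
  -- membership setup
  set S := StarAlgebra.adjoin ℂ ({A, C} : Set (H →L[ℂ] H)) with hS_def
  set T := S.topologicalClosure with hT_def
  have hAmem : A ∈ S := StarAlgebra.subset_adjoin ℂ _ (Set.mem_insert _ _)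
  have hCmem : C ∈ S := StarAlgebra.subset_adjoin ℂ _ (Set.mem_insert_of_mem _ rfl)
  have hAT : A ∈ T := S.le_topologicalClosure hAmem
  have hE00T : E00 ∈ T := by
    have hTset : (T : Set (H →L[ℂ] H)) = closure (S : Set (H →L[ℂ] H)) :=
      StarSubalgebra.topologicalClosure_coe S
    have : E00 ∈ closure (S : Set (H →L[ℂ] H)) := by
      apply mem_closure_of_tendsto htend
      apply Filter.Eventually.of_forall
      intro m
      exact pow_mem (mul_mem (star_mem hCmem) hCmem) m
    rw [← hTset] at this
    exact this
  -- the product formula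
  set P : ℕ → ℝ := fun n => ∏ j ∈ Finset.range n, s j with hP_def
  have hP_pos : ∀ m, 0 < P m := fun m => Finset.prod_pos fun j _ => hs_pos j
  have hPA : ∀ m, ((star A) ^ m) (ee 0) = ((P m : ℝ) : ℂ) • ee m := by
    intro m
    induction m with
    | zero => simp [hP_def]
    | succ m ih =>
      rw [pow_succ', ContinuousLinearMap.mul_apply, ih, map_smul, hstarA, smul_smul,
        hP_def]
      simp only
      rw [Finset.prod_range_succ]
      congr 1
      push_cast
      ring
  -- final operator identity
  have hinner0 : ∀ ζ : H, ⟪ee 0, (A ^ l) ζ⟫ = ((P l : ℝ) : ℂ) * ⟪ee l, ζ⟫ := by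
    intro ζ
    have h1 : ⟪(ContinuousLinearMap.adjoint (A ^ l)) (ee 0), ζ⟫ = ⟪ee 0, (A ^ l) ζ⟫ :=
      ContinuousLinearMap.adjoint_inner_left (A ^ l) ζ (ee 0)
    rw [← h1, ← ContinuousLinearMap.star_eq_adjoint, star_pow, hPA, inner_smul_left]
    simp [Complex.conj_ofReal]
  set c : ℂ := ((P n * P l : ℝ) : ℂ) with hc_def
  have hc_ne : c ≠ 0 := by
    simp only [hc_def, ne_eq, Complex.ofReal_eq_zero]
    exact ne_of_gt (mul_pos (hP_pos n) (hP_pos l))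
  have hkey : (innerSL ℂ (lp.single 2 l (1 : ℂ))).smulRight (lp.single 2 n (1 : ℂ)) =
      c⁻¹ • ((star A) ^ n * (E00 * A ^ l)) := by
    apply ContinuousLinearMap.ext
    intro ζ
    have hLHS : (innerSL ℂ (lp.single 2 l (1 : ℂ))).smulRight (lp.single 2 n (1 : ℂ)) ζ =
        ⟪ee l, ζ⟫ • ee n := rfl
    rw [hLHS, ContinuousLinearMap.smul_apply, ContinuousLinearMap.mul_apply,
      ContinuousLinearMap.mul_apply]
    have hE00app : E00 ((A ^ l) ζ) = (((P l : ℝ) : ℂ) * ⟪ee l, ζ⟫) • ee 0 := by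
      rw [hE00_def, ContinuousLinearMap.smulRight_apply, innerSL_apply_apply, hinner0]
    rw [hE00app, map_smul, hPA, smul_smul, smul_smul]
    congr 1
    have hPl : ((P l : ℝ) : ℂ) ≠ 0 := by
      simpa using ne_of_gt (hP_pos l)
    have hPn : ((P n : ℝ) : ℂ) ≠ 0 := by
      simpa using ne_of_gt (hP_pos n)
    rw [hc_def]
    push_cast
    field_simp
  rw [hkey]
  exact T.smul_mem (mul_mem (pow_mem (star_mem hAT) n) (mul_mem hE00T (pow_mem hAT l))) _

end SUq2Aux
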